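/- Let f, ψ : ℝⁿ → ℝ with f differentiable satisfying |f(x+Ud) − f(x) − ⟨Uᵀ∇f(x), d⟩| ≤ (L_U/2)‖d‖² for all d ∈ ℝᵖ (no convexity assumed on ψ). Let H > L_U and let d* be any global minimizer of d ↦ f(x) + ⟨Uᵀ∇f(x), d⟩ + (H/2)‖d‖² + ψ(x + Ud). Then F(x + Ud*) ≤ F(x) − ((H − L_U)/2)‖d*‖², where F = f + ψ. -/

import Mathlib

open Matrix

noncomputable def sketch {n p : ℕ} (U : Matrix (Fin n) (Fin p) ℝ) :
    EuclideanSpace ℝ (Fin p) →L[ℝ] EuclideanSpace ℝ (Fin n) :=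
  LinearMap.toContinuousLinearMap (Matrix.toEuclideanLin U)

theorem stmt_13 {n p : ℕ} (f ψ : EuclideanSpace ℝ (Fin n) → ℝ) (hf : Differentiable ℝ f)
    (U : Matrix (Fin n) (Fin p) ℝ) (x : EuclideanSpace ℝ (Fin n)) (L H : ℝ)
    (hquad : ∀ d : EuclideanSpace ℝ (Fin p),
      |f (x + sketch U d) - f x - inner ℝ (sketch Uᵀ (gradient f x)) d| ≤ L / 2 * ‖d‖ ^ 2)
    (hH : L < H) (dstar : EuclideanSpace ℝ (Fin p))
    (hmin : ∀ d : EuclideanSpace ℝ (Fin p),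
      f x + inner ℝ (sketch Uᵀ (gradient f x)) dstar + H / 2 * ‖dstar‖ ^ 2 + ψ (x + sketch U dstar)
        ≤ f x + inner ℝ (sketch Uᵀ (gradient f x)) d + H / 2 * ‖d‖ ^ 2 + ψ (x + sketch U d)) :
    f (x + sketch U dstar) + ψ (x + sketch U dstar)
      ≤ f x + ψ x - (H - L) / 2 * ‖dstar‖ ^ 2 := by
  have h0 := hmin 0
  simp only [map_zero, inner_zero_right, norm_zero, add_zero] at h0
  have hq := hquad dstar
  have hq' : f (x + sketch U dstar) ≤
      f x + inner ℝ (sketch Uᵀ (gradient f x)) dstar + L / 2 * ‖dstar‖ ^ 2 := by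
    have := abs_le.mp hq
    linarith [this.2]
  linarith
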